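/- Let 𝔄 be a unital C*-algebra, 𝔅 ⊆ 𝔄 a unital C*-subalgebra containing the unit of 𝔄, and Φ : 𝔄 → 𝔅 a positive conditional expectation. Let U, V ∈ 𝔄 be such that U − 1 and V are monotonically independent over 𝔅 (the closed subalgebra generated by {U − 1} ∪ 𝔅 carrying index 1 and that generated by {V} ∪ 𝔅 carrying index 2). For W ∈ 𝔄 and z ∈ 𝔅 small define ϱ_W(z) = Φ(Wz(1 − Wz)⁻¹) and ρ_W(z) = ϱ_W(z)(1 + ϱ_W(z))⁻¹. Then there exists ε > 0 such that for all z ∈ 𝔅 with ‖z‖ < ε all the relevant inverses exist and ρ_{UV}(z) = ρ_U(ρ_V(z)). -/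

import Mathlib

open scoped BigOperators

/-- An index tuple `j : Fin (ℓ+1) → I` is V-shaped if it is strictly decreasing up to some
position `t` and strictly increasing from `t` on; this encodes the index patterns
`i_m > ⋯ > i_1 < k_1 < ⋯ < k_n` appearing in condition (b) of monotonic independence. -/
def VShaped {I : Type*} [LinearOrder I] {ℓ : ℕ} (j : Fin (ℓ + 1) → I) : Prop :=
  ∃ t : Fin (ℓ + 1),
    (∀ r s : Fin (ℓ + 1), r < s → s ≤ t → j s < j r) ∧
    (∀ r s : Fin (ℓ + 1), t ≤ r → r < s → j r < j s)

/-- A family of subsets `S i` of `A`, indexed by a totally ordered set `I`, is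
monotonically independent with respect to `Φ : A → A`
(`Φ` being a `𝔅`-valued conditional expectation, viewed inside `A`) if:
(a) `Φ (A X_i X_j X_k B) = Φ (A X_i Φ(X_j) X_k B)` whenever `i < j > k` (with the
outer factors `A`, `B` possibly omitted), and
(b) `Φ` factorizes on products whose index tuple decreases strictly and then increases
strictly (`i_m > ⋯ > i_1 < k_1 < ⋯ < k_n`). -/
def MonoIndep {A : Type*} [Monoid A] {I : Type*} [LinearOrder I]
    (Φ : A → A) (S : I → Set A) : Prop :=
  (∀ i j k : I, i < j → k < j → ∀ x ∈ S i, ∀ y ∈ S j, ∀ z ∈ S k,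
      (∀ a b : A, Φ (a * x * y * z * b) = Φ (a * x * Φ y * z * b)) ∧
      (∀ b : A, Φ (x * y * z * b) = Φ (x * Φ y * z * b)) ∧
      (∀ a : A, Φ (a * x * y * z) = Φ (a * x * Φ y * z)) ∧
      Φ (x * y * z) = Φ (x * Φ y * z)) ∧
  (∀ (ℓ : ℕ) (j : Fin (ℓ + 1) → I), VShaped j →
      ∀ x : Fin (ℓ + 1) → A, (∀ r, x r ∈ S (j r)) →
      Φ (List.ofFn x).prod = (List.ofFn fun r => Φ (x r)).prod)

/-- `ϱ_W(z) = Φ(Wz (1 - Wz)⁻¹)`. -/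
noncomputable def varrhoTrans {A : Type*} [Ring A] [Algebra ℂ A]
    (Φ : A →ₗ[ℂ] A) (W z : A) : A :=
  Φ (W * z * Ring.inverse (1 - W * z))

/-- `ρ_W(z) = ϱ_W(z) (1 + ϱ_W(z))⁻¹`. -/
noncomputable def rhoTrans {A : Type*} [Ring A] [Algebra ℂ A]
    (Φ : A →ₗ[ℂ] A) (W z : A) : A :=
  varrhoTrans Φ W z * Ring.inverse (1 + varrhoTrans Φ W z)


section Aux

variable {A : Type*} [CStarAlgebra A]

lemma aux_inverse_eq_tsum (x : A) (h : ‖x‖ < 1) :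
    Ring.inverse (1 - x) = ∑' n : ℕ, x ^ n :=
  (geom_series_eq_inverse x h).symm

lemma aux_inverse_mem (T : Subalgebra ℂ A) (hT : IsClosed (T : Set A))
    {x : A} (hx : x ∈ T) (h : ‖x‖ < 1) : Ring.inverse (1 - x) ∈ T := by
  have hs := (hasSum_geom_series_inverse x h).tendsto_sum_nat
  exact hT.mem_of_tendsto hs (Filter.Eventually.of_forall fun n =>
    sum_mem (fun i _ => pow_mem hx i))

lemma aux_norm_inverse_le [Nontrivial A] (x : A) (h : ‖x‖ < 1) :
    ‖Ring.inverse (1 - x)‖ ≤ (1 - ‖x‖)⁻¹ := by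
  rw [aux_inverse_eq_tsum x h]
  have := tsum_geometric_le_of_norm_lt_one x h
  rwa [norm_one, sub_self, zero_add] at this

lemma aux_phi_nonneg [PartialOrder A] [StarOrderedRing A]
    (Φ : A →ₗ[ℂ] A) (hpos : ∀ a : A, 0 ≤ Φ (star a * a)) {x : A} (hx : 0 ≤ x) :
    0 ≤ Φ x := by
  have h1 : star (CFC.sqrt x) * CFC.sqrt x = x := by
    rw [(IsSelfAdjoint.of_nonneg (CFC.sqrt_nonneg x)).star_eq, CFC.sqrt_mul_sqrt_self x hx]
  simpa [h1] using hpos (CFC.sqrt x)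

end Aux

section PhiNorm
variable {A : Type*} [CStarAlgebra A] [PartialOrder A] [StarOrderedRing A]

lemma aux_phi_norm [Nontrivial A]
    (Φ : A →ₗ[ℂ] A) (hpos : ∀ a : A, 0 ≤ Φ (star a * a)) (hone : Φ 1 = 1) (x : A) :
    ‖Φ x‖ ≤ 6 * ‖x‖ := by
  have hΦalg : ∀ t : ℝ, Φ (algebraMap ℝ A t) = algebraMap ℝ A t := by
    intro t
    rw [IsScalarTower.algebraMap_apply ℝ ℂ A, Algebra.algebraMap_eq_smul_one,
      map_smul, hone]
  have key : ∀ y : A, IsSelfAdjoint y → ‖Φ y‖ ≤ 3 * ‖y‖ := by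
    intro y hy
    have h1 : Φ y ≤ algebraMap ℝ A ‖y‖ := by
      have := aux_phi_nonneg Φ hpos (sub_nonneg.mpr hy.le_algebraMap_norm_self)
      rw [map_sub, hΦalg, sub_nonneg] at this
      exact this
    have h2 : -(algebraMap ℝ A ‖y‖) ≤ Φ y := by
      have := aux_phi_nonneg Φ hpos (sub_nonneg.mpr hy.neg_algebraMap_norm_le_self)
      rw [map_sub, map_neg, hΦalg, sub_nonneg] at this
      exact this
    have h3 : (0 : A) ≤ Φ y + algebraMap ℝ A ‖y‖ := by
      have := add_le_add_left h2 (algebraMap ℝ A ‖y‖)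
      rwa [neg_add_cancel] at this
    have h4 : Φ y + algebraMap ℝ A ‖y‖ ≤ algebraMap ℝ A (2 * ‖y‖) := by
      have : (2 : ℝ) * ‖y‖ = ‖y‖ + ‖y‖ := by ring
      rw [this, map_add]
      exact add_le_add_left h1 _
    have h5 : ‖Φ y + algebraMap ℝ A ‖y‖‖ ≤ 2 * ‖y‖ := by
      refine le_trans (CStarAlgebra.norm_le_norm_of_nonneg_of_le h3 h4) ?_
      rw [norm_algebraMap']
      simp [abs_of_nonneg (by positivity : (0:ℝ) ≤ 2 * ‖y‖)]
    calc ‖Φ y‖ = ‖Φ y + algebraMap ℝ A ‖y‖ - algebraMap ℝ A ‖y‖‖ := by rw [add_sub_cancel_right]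
      _ ≤ ‖Φ y + algebraMap ℝ A ‖y‖‖ + ‖algebraMap ℝ A ‖y‖‖ := norm_sub_le _ _
      _ ≤ 2 * ‖y‖ + ‖y‖ := by
          refine add_le_add h5 ?_
          rw [norm_algebraMap']
          simp
      _ = 3 * ‖y‖ := by ring
  set h : A := ((1:ℂ)/2) • (x + star x) with hh
  set k : A := (-(Complex.I)/2) • (x - star x) with hk
  have hx_eq : x = h + Complex.I • k := by
    rw [hh, hk, smul_smul,
      show Complex.I * (-Complex.I/2) = 1/2 from by linear_combination (-1/2) * Complex.I_sq]
    module
  have hsh : IsSelfAdjoint h := by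
    rw [IsSelfAdjoint, hh, star_smul, star_add, star_star]
    simp only [star_div₀, star_one, RCLike.star_def, map_one]
    rw [Complex.conj_ofNat]
    rw [add_comm (star x) x]
  have hsk : IsSelfAdjoint k := by
    rw [IsSelfAdjoint, hk, star_smul, star_sub, star_star]
    simp only [star_div₀, star_neg, RCLike.star_def, Complex.conj_I, map_one]
    rw [Complex.conj_ofNat]
    rw [neg_neg]
    match_scalars <;> ring
  have hnh : ‖h‖ ≤ ‖x‖ := by
    rw [hh, norm_smul]
    calc ‖(1:ℂ)/2‖ * ‖x + star x‖ ≤ (1/2) * (‖x‖ + ‖x‖) := by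
          rw [show ‖(1:ℂ)/2‖ = 1/2 by norm_num]
          exact mul_le_mul_of_nonneg_left ((norm_add_le _ _).trans (by rw [norm_star])) (by norm_num)
      _ = ‖x‖ := by ring
  have hnk : ‖k‖ ≤ ‖x‖ := by
    rw [hk, norm_smul]
    calc ‖-Complex.I/2‖ * ‖x - star x‖ ≤ (1/2) * (‖x‖ + ‖x‖) := by
          rw [show ‖-Complex.I/2‖ = 1/2 by simp [norm_div]]
          exact mul_le_mul_of_nonneg_left ((norm_sub_le _ _).trans (by rw [norm_star])) (by norm_num)
      _ = ‖x‖ := by ring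
  calc ‖Φ x‖ = ‖Φ h + Complex.I • Φ k‖ := by rw [hx_eq]; simp only [map_add, map_smul]
    _ ≤ ‖Φ h‖ + ‖Complex.I • Φ k‖ := norm_add_le _ _
    _ = ‖Φ h‖ + ‖Φ k‖ := by rw [norm_smul, Complex.norm_I, one_mul]
    _ ≤ 3 * ‖x‖ + 3 * ‖x‖ := add_le_add ((key h hsh).trans (by linarith))
        ((key k hsk).trans (by linarith))
    _ = 6 * ‖x‖ := by ring

end PhiNorm

set_option maxHeartbeats 1600000 in
/-- second identity of Theorem 3.4: if `U - 1` and `V` are monotonically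
independent over `𝔅`, then `ρ_{UV}(z) = ρ_U(ρ_V(z))` for `z` near `0 ∈ 𝔅`. -/
theorem rhoTrans_comp {A : Type*} [CStarAlgebra A] [PartialOrder A] [StarOrderedRing A]
    (B : StarSubalgebra ℂ A) (hBclosed : IsClosed (B : Set A))
    (Φ : A →ₗ[ℂ] A)
    (hmem : ∀ x : A, Φ x ∈ B)
    (hfix : ∀ b ∈ B, Φ b = b)
    (hbimod : ∀ b₁ ∈ B, ∀ b₂ ∈ B, ∀ x : A, Φ (b₁ * x * b₂) = b₁ * Φ x * b₂)
    (hpos : ∀ a : A, 0 ≤ Φ (star a * a))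
    (U V : A)
    (hindep : MonoIndep (fun x => Φ x)
      (fun t : Fin 2 =>
        if t = 0 then
          ((Algebra.adjoin ℂ ({U - 1} ∪ (B : Set A))).topologicalClosure : Set A)
        else
          ((Algebra.adjoin ℂ ({V} ∪ (B : Set A))).topologicalClosure : Set A))) :
    ∃ ε > (0 : ℝ), ∀ z ∈ B, ‖z‖ < ε →
      IsUnit (1 - (U * V) * z) ∧ IsUnit (1 + varrhoTrans Φ (U * V) z) ∧
      IsUnit (1 - V * z) ∧ IsUnit (1 + varrhoTrans Φ V z) ∧
      IsUnit (1 - U * rhoTrans Φ V z) ∧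
      IsUnit (1 + varrhoTrans Φ U (rhoTrans Φ V z)) ∧
      rhoTrans Φ (U * V) z = rhoTrans Φ U (rhoTrans Φ V z) := by
  rcases subsingleton_or_nontrivial A with hsub | hnt
  · refine ⟨1, one_pos, fun z _ _ => ?_⟩
    have h1 : ∀ x : A, IsUnit x := fun x => by
      rw [Subsingleton.elim x 1]; exact isUnit_one
    exact ⟨h1 _, h1 _, h1 _, h1 _, h1 _, h1 _, Subsingleton.elim _ _⟩
  haveI : Nontrivial A := hnt
  have hone : Φ 1 = 1 := hfix 1 B.one_mem
  have hΦn : ∀ x, ‖Φ x‖ ≤ 6 * ‖x‖ := aux_phi_norm Φ hpos hone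
  set X : A := U - 1 with hXdef
  have hUX : U = X + 1 := by rw [hXdef]; abel
  set S0 : Subalgebra ℂ A := (Algebra.adjoin ℂ ({X} ∪ (B : Set A))).topologicalClosure
    with hS0def
  set S1 : Subalgebra ℂ A := (Algebra.adjoin ℂ ({V} ∪ (B : Set A))).topologicalClosure
    with hS1def
  have hS1closed : IsClosed (S1 : Set A) := Subalgebra.isClosed_topologicalClosure _
  have hXS0 : X ∈ S0 :=
    (Algebra.adjoin ℂ _).le_topologicalClosure (Algebra.subset_adjoin (Or.inl rfl))
  have hVS1 : V ∈ S1 :=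
    (Algebra.adjoin ℂ _).le_topologicalClosure (Algebra.subset_adjoin (Or.inl rfl))
  have hBS1 : ∀ b ∈ B, b ∈ S1 := fun b hb =>
    (Algebra.adjoin ℂ _).le_topologicalClosure (Algebra.subset_adjoin (Or.inr hb))
  have hBS0 : ∀ b ∈ B, b ∈ S0 := fun b hb =>
    (Algebra.adjoin ℂ _).le_topologicalClosure (Algebra.subset_adjoin (Or.inr hb))
  set C0 : ℝ := ‖U‖ + ‖V‖ + ‖X‖ + 1 with hC0def
  have hC1 : 1 ≤ C0 := by
    have := norm_nonneg U; have := norm_nonneg V; have := norm_nonneg X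
    rw [hC0def]; linarith
  have hCU : ‖U‖ ≤ C0 := by
    have := norm_nonneg V; have := norm_nonneg X; rw [hC0def]; linarith
  have hCV : ‖V‖ ≤ C0 := by
    have := norm_nonneg U; have := norm_nonneg X; rw [hC0def]; linarith
  have hCX : ‖X‖ ≤ C0 := by
    have := norm_nonneg U; have := norm_nonneg V; rw [hC0def]; linarith
  have hC0pos : (0:ℝ) < C0 := lt_of_lt_of_le one_pos hC1
  refine ⟨(1000 * C0 ^ 3)⁻¹, by positivity, fun z hzB hzn => ?_⟩
  have hposC : (0:ℝ) < 1000 * C0 ^ 3 := by positivity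
  have h1000 : ‖z‖ * (1000 * C0 ^ 3) < 1 := by
    rw [inv_eq_one_div, lt_div_iff₀ hposC] at hzn; exact hzn
  set a : A := V * z with hadef
  have hna : ‖a‖ ≤ C0 * ‖z‖ := by
    calc ‖a‖ ≤ ‖V‖ * ‖z‖ := norm_mul_le _ _
      _ ≤ C0 * ‖z‖ := mul_le_mul_of_nonneg_right hCV (norm_nonneg z)
  have hz0 : (0:ℝ) ≤ ‖z‖ := norm_nonneg z
  have ha0 : (0:ℝ) ≤ ‖a‖ := norm_nonneg a
  have step1 : ‖a‖ * (1000 * C0 ^ 2) < 1 := by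
    calc ‖a‖ * (1000 * C0 ^ 2) ≤ (C0 * ‖z‖) * (1000 * C0 ^ 2) := by
          apply mul_le_mul_of_nonneg_right hna; positivity
      _ = ‖z‖ * (1000 * C0 ^ 3) := by ring
      _ < 1 := h1000
  have hC0sq : C0 ≤ C0 ^ 2 := by nlinarith
  have step2 : ‖a‖ * 1000 < 1 := by
    nlinarith [mul_le_mul_of_nonneg_left (one_le_pow₀ hC1 (n := 2)) (mul_nonneg ha0 (by norm_num : (0:ℝ) ≤ 1000))]
  have stepC : ‖a‖ * C0 * 1000 < 1 := by
    nlinarith [mul_le_mul_of_nonneg_left hC0sq (mul_nonneg (by norm_num : (0:ℝ) ≤ 1000) ha0)]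
  have ha_half : ‖a‖ < 1/2 := by linarith
  have hUVz1 : ‖(U * V) * z‖ < 1/2 := by
    have h1 : ‖(U * V) * z‖ ≤ C0 * ‖a‖ := by
      calc ‖(U * V) * z‖ = ‖U * (V * z)‖ := by rw [mul_assoc]
        _ ≤ ‖U‖ * ‖V * z‖ := norm_mul_le _ _
        _ ≤ C0 * ‖a‖ := by
            rw [← hadef]
            exact mul_le_mul hCU le_rfl (norm_nonneg _) hC0pos.le
    nlinarith
  have hUVunit : IsUnit (1 - (U * V) * z) :=
    isUnit_one_sub_of_norm_lt_one (by linarith)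
  have hVzunit : IsUnit (1 - a) :=
    isUnit_one_sub_of_norm_lt_one (by linarith)
  set Q : A := Ring.inverse (1 - a) with hQdef
  set R : A := Ring.inverse (1 - (U * V) * z) with hRdef
  have hnQ : ‖Q‖ ≤ 2 := by
    refine (aux_norm_inverse_le a (by linarith)).trans ?_
    rw [show (2:ℝ) = ((1:ℝ)/2)⁻¹ by norm_num]
    apply inv_anti₀ <;> linarith
  have hnR : ‖R‖ ≤ 2 := by
    refine (aux_norm_inverse_le _ (by linarith)).trans ?_
    rw [show (2:ℝ) = ((1:ℝ)/2)⁻¹ by norm_num]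
    apply inv_anti₀ <;> linarith
  -- basic inverse identities
  have hQl : (1 - a) * Q = 1 := Ring.mul_inverse_cancel _ hVzunit
  have hQr : Q * (1 - a) = 1 := Ring.inverse_mul_cancel _ hVzunit
  have hRl : (1 - (U * V) * z) * R = 1 := Ring.mul_inverse_cancel _ hUVunit
  have haQ : a * Q = Q - 1 := by
    have h := hQl
    rw [sub_mul, one_mul] at h
    rw [eq_sub_iff_add_eq, ← h]; abel
  set G : A := Φ Q with hGdef
  set c : A := G - 1 with hcdef
  have hGB : G ∈ B := hmem Q
  have hcB : c ∈ B := B.toSubalgebra.sub_mem hGB B.one_mem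
  have hc_eq : Φ (a * Q) = c := by rw [haQ, map_sub, hone, hcdef, hGdef]
  have hnc : ‖c‖ ≤ 12 * ‖a‖ := by
    calc ‖c‖ = ‖Φ (a * Q)‖ := by rw [hc_eq]
      _ ≤ 6 * ‖a * Q‖ := hΦn _
      _ ≤ 6 * (‖a‖ * ‖Q‖) := by
          have := norm_mul_le a Q; linarith
      _ ≤ 12 * ‖a‖ := by nlinarith [norm_nonneg Q]
  have hc0 : (0:ℝ) ≤ ‖c‖ := norm_nonneg c
  have hX0 : (0:ℝ) ≤ ‖X‖ := norm_nonneg X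
  set q : ℝ := ‖c‖ * ‖X‖ with hqdef
  have hq0 : (0:ℝ) ≤ q := mul_nonneg hc0 hX0
  have hnc1000 : ‖c‖ * 1000 ≤ 12000 * ‖a‖ := by nlinarith
  have hq50 : q < 1/50 := by
    have h1 : q ≤ 12 * ‖a‖ * C0 := by
      rw [hqdef]
      exact mul_le_mul hnc hCX hX0 (by positivity)
    linarith
  have hq1 : q < 1 := by linarith
  have hcX : ‖c * X‖ ≤ q := by rw [hqdef]; exact norm_mul_le _ _
  have hXc : ‖X * c‖ ≤ q := by
    rw [hqdef, mul_comm ‖c‖]; exact norm_mul_le _ _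
  have hXcunit : IsUnit (1 - X * c) := isUnit_one_sub_of_norm_lt_one (by linarith)
  set T : A := Ring.inverse (1 - X * c) with hTdef
  have hnT : ‖T‖ ≤ 2 := by
    refine (aux_norm_inverse_le _ (by linarith)).trans ?_
    rw [show (2:ℝ) = ((1:ℝ)/2)⁻¹ by norm_num]
    apply inv_anti₀ <;> linarith
  have hTid : T = 1 + X * c * T := by
    have h := Ring.mul_inverse_cancel _ hXcunit
    rw [← hTdef, sub_mul, one_mul] at h
    exact sub_eq_iff_eq_add.mp h
  -- memberships
  have haS1 : a ∈ S1 := by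
    rw [hadef]; exact S1.mul_mem hVS1 (hBS1 z hzB)
  have hQS1 : Q ∈ S1 := aux_inverse_mem S1 hS1closed haS1 (by linarith)
  have haQS1 : a * Q ∈ S1 := S1.mul_mem haS1 hQS1
  have hcS0 : c ∈ S0 := hBS0 c hcB
  set Y : ℕ → A := fun m => X * (c * X) ^ m with hYdef
  have hYS0 : ∀ m, Y m ∈ S0 := fun m =>
    S0.mul_mem hXS0 (S0.pow_mem (S0.mul_mem hcS0 hXS0) m)
  have hnY : ∀ m, ‖Y m‖ ≤ ‖X‖ * q ^ m := fun m => by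
    calc ‖Y m‖ ≤ ‖X‖ * ‖(c * X) ^ m‖ := norm_mul_le _ _
      _ ≤ ‖X‖ * ‖c * X‖ ^ m := by
          exact mul_le_mul_of_nonneg_left (norm_pow_le _ _) hX0
      _ ≤ ‖X‖ * q ^ m := by
          exact mul_le_mul_of_nonneg_left (pow_le_pow_left₀ (norm_nonneg _) hcX m) hX0
  -- the fundamental recursion identity
  have hW : (U * V) * z = a + X * a := by
    rw [hadef, hXdef]; noncomm_ring
  have hstep : (1 - a) * R = 1 + X * (a * R) := by
    have h := hRl
    rw [hW, sub_mul, one_mul, add_mul, ← sub_sub, mul_assoc X a R] at h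
    rw [sub_mul, one_mul]
    exact sub_eq_iff_eq_add.mp h
  have hkey : R = Q + Q * (X * (a * R)) := by
    calc R = (Q * (1 - a)) * R := by rw [hQr, one_mul]
      _ = Q * ((1 - a) * R) := by rw [mul_assoc]
      _ = Q * (1 + X * (a * R)) := by rw [hstep]
      _ = Q + Q * (X * (a * R)) := by rw [mul_add, mul_one]
  have hYm : ∀ m, Y m = X * (c * X) ^ m := fun _ => rfl
  clear_value X a Q R G c T Y
  -- condition (b) consequence
  have hb : ∀ m, Φ (Q * (Y m * (a * Q))) = G * (Φ (Y m) * c) := by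
    intro m
    have hv : VShaped (![1, 0, 1] : Fin 3 → Fin 2) := by unfold VShaped; decide
    have hx : ∀ r : Fin 3, (![Q, Y m, a * Q]) r ∈
        (fun t : Fin 2 => if t = 0 then (S0 : Set A) else (S1 : Set A))
          ((![1, 0, 1] : Fin 3 → Fin 2) r) := by
      intro r
      fin_cases r
      · exact hQS1
      · exact hYS0 m
      · exact haQS1
    have h := hindep.2 2 ![1, 0, 1] hv ![Q, Y m, a * Q] hx
    beta_reduce at h
    have hL : (List.ofFn ![Q, Y m, a * Q]).prod = Q * (Y m * (a * Q)) := by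
      simp [List.ofFn_succ]
    have hR2 : (List.ofFn fun r => Φ ((![Q, Y m, a * Q]) r)).prod
        = Φ Q * (Φ (Y m) * Φ (a * Q)) := by
      simp [List.ofFn_succ]
    rw [hL, hR2, hc_eq, ← hGdef] at h
    exact h
  -- condition (a) consequence
  have ha' : ∀ m, Φ (Q * (Y m * (a * (Q * (X * (a * R))))))
      = Φ (Q * (Y (m + 1) * (a * R))) := by
    intro m
    have h := (hindep.1 0 1 0 (by decide) (by decide)
      (Y m) (hYS0 m) (a * Q) haQS1 X hXS0).1 Q (a * R)
    beta_reduce at h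
    have hys : Y m * (c * X) = Y (m + 1) := by
      rw [hYm, hYm, pow_succ, mul_assoc]
    calc Φ (Q * (Y m * (a * (Q * (X * (a * R))))))
        = Φ (Q * Y m * (a * Q) * X * (a * R)) := by
          rw [show Q * (Y m * (a * (Q * (X * (a * R))))) = Q * Y m * (a * Q) * X * (a * R)
            from by simp only [mul_assoc]]
      _ = Φ (Q * Y m * Φ (a * Q) * X * (a * R)) := h
      _ = Φ (Q * (Y (m + 1) * (a * R))) := by
          rw [hc_eq]
          rw [show Q * Y m * c * X * (a * R) = Q * (Y (m + 1) * (a * R))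
            from by rw [← hys]; simp only [mul_assoc]]
  -- the recursion for Φ R
  have hrec : ∀ M, Φ R = G + (∑ m ∈ Finset.range M, G * (Φ (Y m) * c))
      + Φ (Q * (Y M * (a * R))) := by
    intro M
    induction M with
    | zero =>
        have h0 : Q * (Y 0 * (a * R)) = Q * (X * (a * R)) := by
          rw [hYm, pow_zero, mul_one]
        rw [Finset.range_zero, Finset.sum_empty, add_zero, h0]
        conv_lhs => rw [hkey]
        rw [map_add, hGdef]
    | succ M ih =>
        have haR : a * R = a * Q + a * (Q * (X * (a * R))) := by
          conv_lhs => rw [hkey]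
          rw [mul_add]
        have hsplit : Φ (Q * (Y M * (a * R)))
            = G * (Φ (Y M) * c) + Φ (Q * (Y (M + 1) * (a * R))) := by
          calc Φ (Q * (Y M * (a * R)))
              = Φ (Q * (Y M * (a * Q)) + Q * (Y M * (a * (Q * (X * (a * R)))))) := by
                conv_lhs => rw [haR, mul_add, mul_add]
            _ = Φ (Q * (Y M * (a * Q))) + Φ (Q * (Y M * (a * (Q * (X * (a * R)))))) :=
                map_add Φ _ _
            _ = G * (Φ (Y M) * c) + Φ (Q * (Y (M + 1) * (a * R))) := by
                rw [hb M, ha' M]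
        rw [ih, hsplit, Finset.sum_range_succ]
        abel
  -- the recursion for G * Φ T
  have hsemi : ∀ m, Y m * c = (X * c) ^ (m + 1) := by
    intro m
    have hsc : SemiconjBy X (c * X) (X * c) := (mul_assoc X c X).symm
    have h2 := hsc.pow_right m
    rw [hYm, h2.eq, pow_succ, mul_assoc]
  have hbim1 : ∀ x : A, Φ (x * c) = Φ x * c := by
    intro x
    have := hbimod 1 B.one_mem c hcB x
    simpa using this
  have hrec' : ∀ M, G * Φ T = G + (∑ m ∈ Finset.range M, G * (Φ (Y m) * c))
      + G * Φ ((X * c) ^ (M + 1) * T) := by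
    intro M
    induction M with
    | zero =>
        rw [Finset.range_zero, Finset.sum_empty, add_zero, pow_one]
        conv_lhs => rw [hTid]
        rw [map_add, hone, mul_add, mul_one]
    | succ M ih =>
        have hsp : (X * c) ^ (M + 1) * T = (X * c) ^ (M + 1) + (X * c) ^ (M + 2) * T := by
          conv_lhs => rw [hTid]
          rw [mul_add, mul_one, ← mul_assoc, ← pow_succ]
        have hstep2 : G * Φ ((X * c) ^ (M + 1) * T)
            = G * (Φ (Y M) * c) + G * Φ ((X * c) ^ (M + 2) * T) := by
          rw [hsp, map_add, mul_add, ← hsemi M, hbim1]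
        rw [ih, hstep2, Finset.sum_range_succ]
        abel
  -- norm estimate and limit
  have hbound : ∀ M : ℕ, ‖Φ R - G * Φ T‖ ≤ (24 * ‖X‖ * ‖a‖ + 24) * q ^ M := by
    intro M
    have hdiff : Φ R - G * Φ T
        = Φ (Q * (Y M * (a * R))) - G * Φ ((X * c) ^ (M + 1) * T) := by
      rw [hrec M, hrec' M]; abel
    have e1 : ‖a * R‖ ≤ ‖a‖ * 2 :=
      (norm_mul_le _ _).trans (mul_le_mul_of_nonneg_left hnR ha0)
    have e2 : ‖Y M * (a * R)‖ ≤ (‖X‖ * q ^ M) * (‖a‖ * 2) :=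
      (norm_mul_le _ _).trans (mul_le_mul (hnY M) e1 (norm_nonneg _) (by positivity))
    have e3 : ‖Q * (Y M * (a * R))‖ ≤ 2 * ((‖X‖ * q ^ M) * (‖a‖ * 2)) :=
      (norm_mul_le _ _).trans (mul_le_mul hnQ e2 (norm_nonneg _) (by norm_num))
    have t1 : ‖Φ (Q * (Y M * (a * R)))‖ ≤ 24 * ‖X‖ * ‖a‖ * q ^ M := by
      calc ‖Φ (Q * (Y M * (a * R)))‖ ≤ 6 * ‖Q * (Y M * (a * R))‖ := hΦn _
        _ ≤ 6 * (2 * ((‖X‖ * q ^ M) * (‖a‖ * 2))) := by linarith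
        _ = 24 * ‖X‖ * ‖a‖ * q ^ M := by ring
    have f1 : ‖(X * c) ^ (M + 1)‖ ≤ q ^ (M + 1) :=
      (norm_pow_le' _ (Nat.succ_pos M)).trans (pow_le_pow_left₀ (norm_nonneg _) hXc _)
    have f2 : ‖(X * c) ^ (M + 1) * T‖ ≤ q ^ (M + 1) * 2 :=
      (norm_mul_le _ _).trans (mul_le_mul f1 hnT (norm_nonneg _) (by positivity))
    have hG1eq : G = 1 + c := by rw [hcdef]; abel
    have hnG : ‖G‖ ≤ 2 := by
      rw [hG1eq]
      refine (norm_add_le _ _).trans ?_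
      rw [norm_one]
      linarith
    have f3 : ‖G * Φ ((X * c) ^ (M + 1) * T)‖ ≤ 24 * q ^ M := by
      have g1 : ‖Φ ((X * c) ^ (M + 1) * T)‖ ≤ 6 * (q ^ (M + 1) * 2) :=
        (hΦn _).trans (by linarith)
      have g2 : q ^ (M + 1) ≤ q ^ M := pow_le_pow_of_le_one hq0 hq1.le (Nat.le_succ M)
      calc ‖G * Φ ((X * c) ^ (M + 1) * T)‖ ≤ ‖G‖ * ‖Φ ((X * c) ^ (M + 1) * T)‖ :=
            norm_mul_le _ _
        _ ≤ 2 * (6 * (q ^ (M + 1) * 2)) := by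
            apply mul_le_mul hnG g1 (norm_nonneg _) (by norm_num)
        _ = 24 * q ^ (M + 1) := by ring
        _ ≤ 24 * q ^ M := by linarith
    calc ‖Φ R - G * Φ T‖
        = ‖Φ (Q * (Y M * (a * R))) - G * Φ ((X * c) ^ (M + 1) * T)‖ := by rw [hdiff]
      _ ≤ ‖Φ (Q * (Y M * (a * R)))‖ + ‖G * Φ ((X * c) ^ (M + 1) * T)‖ := norm_sub_le _ _
      _ ≤ 24 * ‖X‖ * ‖a‖ * q ^ M + 24 * q ^ M := add_le_add t1 f3
      _ = (24 * ‖X‖ * ‖a‖ + 24) * q ^ M := by ring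
  have hfinal : Φ R = G * Φ T := by
    have h0 : Filter.Tendsto (fun M : ℕ => (24 * ‖X‖ * ‖a‖ + 24) * q ^ M)
        Filter.atTop (nhds 0) := by
      rw [show (0:ℝ) = (24 * ‖X‖ * ‖a‖ + 24) * 0 by ring]
      exact (tendsto_pow_atTop_nhds_zero_of_lt_one hq0 hq1).const_mul _
    have h1 : ‖Φ R - G * Φ T‖ ≤ 0 := ge_of_tendsto' h0 hbound
    have h2 := norm_le_zero_iff.mp h1
    exact sub_eq_zero.mp h2
  -- identify the transforms
  have hvrUV : varrhoTrans Φ (U * V) z = Φ R - 1 := by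
    have hdef : varrhoTrans Φ (U * V) z
        = Φ (U * V * z * Ring.inverse (1 - U * V * z)) := rfl
    rw [hdef, ← hRdef]
    have h := hRl
    rw [sub_mul, one_mul] at h
    have harg : U * V * z * R = R - 1 := by
      rw [eq_sub_iff_add_eq, ← h]; abel
    rw [harg, map_sub, hone]
  have h1pUV : 1 + varrhoTrans Φ (U * V) z = Φ R := by rw [hvrUV]; abel
  have hvrV : varrhoTrans Φ V z = c := by
    have hdef : varrhoTrans Φ V z = Φ (V * z * Ring.inverse (1 - V * z)) := rfl
    rw [hdef, ← hadef, ← hQdef]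
    exact hc_eq
  have h1pV : 1 + varrhoTrans Φ V z = G := by rw [hvrV, hcdef]; abel
  have hncsmall : ‖c‖ < 1/50 := by
    have : ‖a‖ < 1/1000 := by linarith
    linarith
  have hGunit : IsUnit G := by
    have h1 : ‖1 - G‖ < 1 := by
      rw [show (1 : A) - G = -c from by rw [hcdef]; abel, norm_neg]
      linarith
    have h2 := isUnit_one_sub_of_norm_lt_one h1
    rwa [sub_sub_cancel] at h2
  have hw : rhoTrans Φ V z = c * Ring.inverse G := by
    have hdef : rhoTrans Φ V z
        = varrhoTrans Φ V z * Ring.inverse (1 + varrhoTrans Φ V z) := rfl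
    rw [hdef, h1pV, hvrV]
  have hgid : 1 - c * Ring.inverse G = Ring.inverse G := by
    have h := Ring.mul_inverse_cancel G hGunit
    have hGc1 : G - c = 1 := by rw [hcdef]; abel
    have e := sub_mul G c (Ring.inverse G)
    rw [hGc1, one_mul, h] at e
    exact e.symm
  have h1mUw : 1 - U * (c * Ring.inverse G) = (1 - X * c) * Ring.inverse G := by
    rw [hUX]
    calc 1 - (X + 1) * (c * Ring.inverse G)
        = (1 - c * Ring.inverse G) - X * (c * Ring.inverse G) := by noncomm_ring
      _ = Ring.inverse G - X * (c * Ring.inverse G) := by rw [hgid]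
      _ = (1 - X * c) * Ring.inverse G := by rw [sub_mul, one_mul, mul_assoc]
  have hRinvG : Ring.inverse G = ((hGunit.unit⁻¹ : Aˣ) : A) := by
    conv_lhs => rw [← hGunit.unit_spec]
    rw [Ring.inverse_unit]
  have hinvGunit : IsUnit (Ring.inverse G) := by
    rw [hRinvG]; exact Units.isUnit _
  have hUwUnit : IsUnit (1 - U * (c * Ring.inverse G)) := by
    rw [h1mUw]; exact hXcunit.mul hinvGunit
  have hinvUw : Ring.inverse (1 - U * (c * Ring.inverse G)) = G * T := by
    have hval : ((hXcunit.unit * hGunit.unit⁻¹ : Aˣ) : A)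
        = 1 - U * (c * Ring.inverse G) := by
      rw [Units.val_mul, hXcunit.unit_spec, ← hRinvG, h1mUw]
    calc Ring.inverse (1 - U * (c * Ring.inverse G))
        = Ring.inverse ((hXcunit.unit * hGunit.unit⁻¹ : Aˣ) : A) := by rw [hval]
      _ = (((hXcunit.unit * hGunit.unit⁻¹)⁻¹ : Aˣ) : A) := Ring.inverse_unit _
      _ = G * T := by
          rw [mul_inv_rev, inv_inv, Units.val_mul, hGunit.unit_spec]
          congr 1
          rw [hTdef]
          conv_rhs => rw [← hXcunit.unit_spec]
          rw [Ring.inverse_unit]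
  have hGT : Φ (G * T) = G * Φ T := by
    have h := hbimod G hGB 1 B.one_mem T
    simpa using h
  have hvrU : varrhoTrans Φ U (rhoTrans Φ V z) = G * Φ T - 1 := by
    have hdef : varrhoTrans Φ U (rhoTrans Φ V z)
        = Φ (U * rhoTrans Φ V z * Ring.inverse (1 - U * rhoTrans Φ V z)) := rfl
    rw [hdef, hw]
    have h := Ring.mul_inverse_cancel _ hUwUnit
    rw [sub_mul, one_mul] at h
    have h2 : U * (c * Ring.inverse G) * Ring.inverse (1 - U * (c * Ring.inverse G))
        + (Ring.inverse (1 - U * (c * Ring.inverse G))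
            - U * (c * Ring.inverse G) * Ring.inverse (1 - U * (c * Ring.inverse G)))
        = Ring.inverse (1 - U * (c * Ring.inverse G)) := by abel
    rw [h] at h2
    have harg := eq_sub_of_add_eq h2
    rw [harg, hinvUw, map_sub, hone, hGT]
  have h1pU : 1 + varrhoTrans Φ U (rhoTrans Φ V z) = G * Φ T := by rw [hvrU]; abel
  have hGTunit : IsUnit (G * Φ T) := by
    have hG1eq : G = 1 + c := by rw [hcdef]; abel
    have hT1 : T - 1 = X * c * T := by
      conv_lhs => rw [hTid]
      abel
    have k1 : G * Φ T - 1 = c * Φ T + Φ (X * c * T) := by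
      calc G * Φ T - 1 = (1 + c) * Φ T - 1 := by rw [← hG1eq]
        _ = c * Φ T + (Φ T - 1) := by noncomm_ring
        _ = c * Φ T + Φ (X * c * T) := by rw [← hone, ← map_sub, hT1]
    have hnPhiT : ‖Φ T‖ ≤ 12 := (hΦn T).trans (by linarith)
    have hnXcT : ‖X * c * T‖ ≤ q * 2 :=
      (norm_mul_le _ _).trans (mul_le_mul hXc hnT (norm_nonneg _) hq0)
    have k2 : ‖G * Φ T - 1‖ < 1 := by
      rw [k1]
      have b1 : ‖c * Φ T‖ ≤ ‖c‖ * 12 :=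
        (norm_mul_le _ _).trans (mul_le_mul_of_nonneg_left hnPhiT hc0)
      have b2 : ‖Φ (X * c * T)‖ ≤ 6 * (q * 2) := (hΦn _).trans (by linarith)
      calc ‖c * Φ T + Φ (X * c * T)‖ ≤ ‖c * Φ T‖ + ‖Φ (X * c * T)‖ := norm_add_le _ _
        _ < 1 := by linarith
    have h2 := isUnit_one_sub_of_norm_lt_one (x := 1 - G * Φ T)
      (by rwa [norm_sub_rev] at k2)
    rwa [sub_sub_cancel] at h2
  refine ⟨hUVunit, ?_, hVzunit, ?_, ?_, ?_, ?_⟩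
  · rw [h1pUV, hfinal]; exact hGTunit
  · rw [h1pV]; exact hGunit
  · rw [hw, h1mUw]; exact hXcunit.mul hinvGunit
  · rw [h1pU]; exact hGTunit
  · calc rhoTrans Φ (U * V) z
        = varrhoTrans Φ (U * V) z * Ring.inverse (1 + varrhoTrans Φ (U * V) z) := rfl
      _ = (Φ R - 1) * Ring.inverse (Φ R) := by rw [h1pUV, hvrUV]
      _ = (G * Φ T - 1) * Ring.inverse (G * Φ T) := by rw [hfinal]
      _ = varrhoTrans Φ U (rhoTrans Φ V z)
            * Ring.inverse (1 + varrhoTrans Φ U (rhoTrans Φ V z)) := by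
          rw [h1pU, hvrU]
      _ = rhoTrans Φ U (rhoTrans Φ V z) := rfl
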